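/- Let s ∈ (0,1) and assume α₀ < 0 (i.e. σ_{−1,1} > σ_{−1,0} + σ_{0,1}). Let Ω ⊂ ℝ be a bounded domain with 0 ∈ Ω and let r > 0. Let E be an admissible triple of subsets of ℝ with (0, r) ⊆ E₁ and (−r, 0) ⊆ E₋₁. Then there exist C₀ > 0 (depending only on s) and ε₀ > 0 (depending on s, r, dist(0, ∂Ω) and the σ_{i,j}) such that for every ε ∈ (0, ε₀), the admissible triple E^ε defined by E₁^ε = E₁ \ (0, ε), E₀^ε = E₀ ∪ (0, ε), E₋₁^ε = E₋₁ satisfies F^s(E, Ω) ≥ F^s(E^ε, Ω) + C₀ |α₀| ε^{1−s}. -/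

import Mathlib

open MeasureTheory Filter ENNReal

/-- The 1D nonlocal interaction `L^s(A,B) = ∫_A ∫_B |x-y|^{-(1+s)} dy dx ∈ [0,∞]`. -/
noncomputable def Ls1 (s : ℝ) (A B : Set ℝ) : ℝ≥0∞ :=
  ∫⁻ x in A, ∫⁻ y in B, ENNReal.ofReal (1 / |x - y| ^ (1 + s))

/-- The 1D nonlocal area `Per^s_Ω(A,B)`. -/
noncomputable def nlArea1 (s : ℝ) (Ω A B : Set ℝ) : ℝ≥0∞ :=
  Ls1 s (A ∩ Ω) (B ∩ Ω) + Ls1 s (A ∩ Ω) (B ∩ Ωᶜ) + Ls1 s (A ∩ Ωᶜ) (B ∩ Ω)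

/-- An admissible triple of subsets of `ℝ`. -/
def Admissible1 (Em E0 E1 : Set ℝ) : Prop :=
  MeasurableSet Em ∧ MeasurableSet E0 ∧ MeasurableSet E1 ∧
  volume ((Em ∪ E0 ∪ E1)ᶜ) = 0 ∧
  volume (Em ∩ E0) = 0 ∧ volume (Em ∩ E1) = 0 ∧ volume (E0 ∩ E1) = 0

/-- The 1D weighted nonlocal energy `F^s`. -/
noncomputable def Fs1 (s σm0 σ01 σm1 : ℝ) (Ω Em E0 E1 : Set ℝ) : ℝ≥0∞ :=
  ENNReal.ofReal σm0 * nlArea1 s Ω Em E0 + ENNReal.ofReal σ01 * nlArea1 s Ω E0 E1 +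
    ENNReal.ofReal σm1 * nlArea1 s Ω Em E1

section Helpers

open Set

private lemma kmeas (s : ℝ) :
    Measurable fun p : ℝ × ℝ => ENNReal.ofReal (1 / |p.1 - p.2| ^ (1 + s)) := by fun_prop

private lemma inner_meas (s : ℝ) (B : Set ℝ) :
    Measurable fun x : ℝ => ∫⁻ y in B, ENNReal.ofReal (1 / |x - y| ^ (1 + s)) :=
  Measurable.lintegral_prod_right
    (f := fun x y : ℝ => ENNReal.ofReal (1 / |x - y| ^ (1 + s))) (kmeas s)

private lemma Ls1_union_left (s : ℝ) {A A' : Set ℝ} (B : Set ℝ)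
    (hd : AEDisjoint volume A A') (hA' : NullMeasurableSet A' volume) :
    Ls1 s (A ∪ A') B = Ls1 s A B + Ls1 s A' B := by
  unfold Ls1
  rw [Measure.restrict_union₀ hd hA', lintegral_add_measure]

private lemma Ls1_union_right (s : ℝ) (A : Set ℝ) {B B' : Set ℝ}
    (hd : AEDisjoint volume B B') (hB' : NullMeasurableSet B' volume) :
    Ls1 s A (B ∪ B') = Ls1 s A B + Ls1 s A B' := by
  unfold Ls1
  have h : ∀ x : ℝ, ∫⁻ y in B ∪ B', ENNReal.ofReal (1 / |x - y| ^ (1 + s))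
      = (∫⁻ y in B, ENNReal.ofReal (1 / |x - y| ^ (1 + s)))
        + ∫⁻ y in B', ENNReal.ofReal (1 / |x - y| ^ (1 + s)) := by
    intro x
    rw [Measure.restrict_union₀ hd hB', lintegral_add_measure]
  simp_rw [h]
  exact lintegral_add_left (inner_meas s B) _

private lemma Ls1_union_le (s : ℝ) (A B C : Set ℝ) :
    Ls1 s A (B ∪ C) ≤ Ls1 s A B + Ls1 s A C := by
  unfold Ls1
  refine le_trans (lintegral_mono fun x => lintegral_union_le _ _ _) ?_
  exact le_of_eq (lintegral_add_left (inner_meas s B) _)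

private lemma Ls1_mono_left (s : ℝ) {A A' : Set ℝ} (B : Set ℝ) (h : A ≤ᵐ[volume] A') :
    Ls1 s A B ≤ Ls1 s A' B :=
  lintegral_mono_set' h

private lemma Ls1_mono_right (s : ℝ) (A : Set ℝ) {B B' : Set ℝ} (h : B ≤ᵐ[volume] B') :
    Ls1 s A B ≤ Ls1 s A B' :=
  lintegral_mono fun _ => lintegral_mono_set' h

private lemma Ls1_symm (s : ℝ) (A B : Set ℝ) : Ls1 s A B = Ls1 s B A := by
  unfold Ls1
  rw [lintegral_lintegral_swap ((kmeas s).aemeasurable)]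
  refine lintegral_congr fun y => lintegral_congr fun x => ?_
  rw [abs_sub_comm]

private lemma nlArea1_symm (s : ℝ) (Ω A B : Set ℝ) : nlArea1 s Ω A B = nlArea1 s Ω B A := by
  unfold nlArea1
  rw [Ls1_symm s (A ∩ Ω) (B ∩ Ω), Ls1_symm s (A ∩ Ω) (B ∩ Ωᶜ), Ls1_symm s (A ∩ Ωᶜ) (B ∩ Ω)]
  ring

/-- Splitting off a piece `I ⊆ Ω` from the second argument of the nonlocal area. -/
private lemma nlArea1_union_right (s : ℝ) {Ω : Set ℝ} (hΩ : MeasurableSet Ω)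
    {A B I : Set ℝ} (hA : MeasurableSet A) (hI : MeasurableSet I)
    (hIΩ : I ⊆ Ω) (hd : AEDisjoint volume B I) :
    nlArea1 s Ω A (B ∪ I) = nlArea1 s Ω A B + Ls1 s A I := by
  have h1 : (B ∪ I) ∩ Ω = (B ∩ Ω) ∪ I := by
    rw [Set.union_inter_distrib_right, Set.inter_eq_self_of_subset_left hIΩ]
  have h2 : (B ∪ I) ∩ Ωᶜ = B ∩ Ωᶜ := by
    rw [Set.union_inter_distrib_right]
    have : I ∩ Ωᶜ = ∅ := by
      rw [Set.eq_empty_iff_forall_notMem]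
      exact fun x hx => hx.2 (hIΩ hx.1)
    rw [this, Set.union_empty]
  have hAsplit : Ls1 s A I = Ls1 s (A ∩ Ω) I + Ls1 s (A ∩ Ωᶜ) I := by
    conv_lhs => rw [← Set.inter_union_compl A Ω]
    exact Ls1_union_left s I
      ((Set.disjoint_of_subset (Set.inter_subset_right) (Set.inter_subset_right)
        disjoint_compl_right.symm).symm.aedisjoint)
      ((hA.inter hΩ.compl).nullMeasurableSet)
  unfold nlArea1
  rw [h1, h2,
    Ls1_union_right s (A ∩ Ω) (hd.mono Set.inter_subset_left subset_rfl) hI.nullMeasurableSet,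
    Ls1_union_right s (A ∩ Ωᶜ) (hd.mono Set.inter_subset_left subset_rfl) hI.nullMeasurableSet,
    hAsplit]
  ring

/-- Reflection invariance: `∫⁻ y in T⁻¹ S, f (c - y) = ∫⁻ y in S, f y` for `T = c - ·`. -/
private lemma lint_reflect (c : ℝ) (f : ℝ → ℝ≥0∞) (S : Set ℝ) :
    ∫⁻ y in (fun x : ℝ => c - x) ⁻¹' S, f (c - y) = ∫⁻ y in S, f y :=
  (Measure.measurePreserving_sub_left volume c).setLIntegral_comp_preimage_emb
    (MeasurableEquiv.subLeft c).measurableEmbedding f S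

/-- Reflection: `L((0,ε), [ε,∞)) = L((0,ε), (-∞,0])`. -/
private lemma Ls1_reflect (s ε : ℝ) :
    Ls1 s (Set.Ioo 0 ε) (Set.Ici ε) = Ls1 s (Set.Ioo 0 ε) (Set.Iic 0) := by
  unfold Ls1
  have hpre1 : (fun x : ℝ => ε - x) ⁻¹' Set.Iic 0 = Set.Ici ε := by
    ext x; simp only [Set.mem_preimage, Set.mem_Iic, Set.mem_Ici]; constructor <;> intro <;> linarith
  have hpre2 : (fun x : ℝ => ε - x) ⁻¹' Set.Ioo 0 ε = Set.Ioo 0 ε := by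
    ext x; simp only [Set.mem_preimage, Set.mem_Ioo]; constructor <;> rintro ⟨h1, h2⟩ <;>
      exact ⟨by linarith, by linarith⟩
  have hinner : ∀ t : ℝ, (∫⁻ y in Set.Ici ε, ENNReal.ofReal (1 / |t - y| ^ (1 + s)))
      = ∫⁻ y in Set.Iic 0, ENNReal.ofReal (1 / |ε - t - y| ^ (1 + s)) := by
    intro t
    conv_lhs => rw [← hpre1]
    rw [← lint_reflect ε (fun y => ENNReal.ofReal (1 / |ε - t - y| ^ (1 + s))) (Set.Iic 0)]
    refine lintegral_congr fun y => ?_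
    have h1 : ε - t - (ε - y) = y - t := by ring
    simp only [h1, abs_sub_comm y t]
  simp_rw [hinner]
  have outer : ∀ g : ℝ → ℝ≥0∞,
      (∫⁻ x in Set.Ioo 0 ε, g (ε - x)) = ∫⁻ x in Set.Ioo 0 ε, g x := by
    intro g
    conv_lhs => rw [← hpre2]
    exact lint_reflect ε g (Set.Ioo 0 ε)
  exact outer (fun t => ∫⁻ y in Set.Iic 0, ENNReal.ofReal (1 / |t - y| ^ (1 + s)))

/-- The exact tail integral `∫_{Ioi c} u^{-(1+s)} du = c^{-s}/s`. -/
private lemma lint_tail {s : ℝ} (hs : 0 < s) {c : ℝ} (hc : 0 < c) :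
    ∫⁻ u in Set.Ioi c, ENNReal.ofReal (1 / |u| ^ (1 + s)) = ENNReal.ofReal (c ^ (-s) / s) := by
  have hlt : (-(1 + s)) < -1 := by linarith
  have hint : IntegrableOn (fun u : ℝ => u ^ (-(1 + s))) (Set.Ioi c) volume :=
    integrableOn_Ioi_rpow_of_lt hlt hc
  have heq : ∫⁻ u in Set.Ioi c, ENNReal.ofReal (1 / |u| ^ (1 + s))
      = ∫⁻ u in Set.Ioi c, ENNReal.ofReal (u ^ (-(1 + s))) := by
    refine setLIntegral_congr_fun measurableSet_Ioi ?_
    intro u hu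
    have hu0 : 0 < u := lt_trans hc hu
    beta_reduce
    rw [abs_of_pos hu0, Real.rpow_neg hu0.le, one_div]
  rw [heq, ← ofReal_integral_eq_lintegral_ofReal hint ?nonneg]
  · congr 1
    rw [integral_Ioi_rpow_of_lt hlt hc]
    have h2 : -(1 + s) + 1 = -s := by ring
    rw [h2, neg_div_neg_eq]
  case nonneg =>
    filter_upwards [ae_restrict_mem measurableSet_Ioi] with u hu
    exact Real.rpow_nonneg (le_of_lt (lt_trans hc hu)) _

private lemma inner_meas_y (s x : ℝ) :
    Measurable fun y : ℝ => ENNReal.ofReal (1 / |x - y| ^ (1 + s)) := by fun_prop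

/-- Tail bound: `L((0,ε), (-∞,-r]) ≤ r^{-s}/s · ε`. -/
private lemma Ls1_tail_le {s : ℝ} (hs : 0 < s) {r ε : ℝ} (hr : 0 < r) (hε : 0 < ε) :
    Ls1 s (Set.Ioo 0 ε) (Set.Iic (-r)) ≤ ENNReal.ofReal (r ^ (-s) / s * ε) := by
  have hbound : ∀ x ∈ Set.Ioo (0:ℝ) ε,
      (∫⁻ y in Set.Iic (-r), ENNReal.ofReal (1 / |x - y| ^ (1 + s)))
        ≤ ENNReal.ofReal (r ^ (-s) / s) := by
    intro x hx
    have hx0 : 0 < x := hx.1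
    have hpre : (fun u : ℝ => x - u) ⁻¹' Set.Iic (-r) = Set.Ici (x + r) := by
      ext u; simp only [Set.mem_preimage, Set.mem_Iic, Set.mem_Ici]
      constructor <;> intro <;> linarith
    have hsub : (∫⁻ y in Set.Iic (-r), ENNReal.ofReal (1 / |x - y| ^ (1 + s)))
        = ∫⁻ u in Set.Ici (x + r), ENNReal.ofReal (1 / |u| ^ (1 + s)) := by
      rw [← lint_reflect x (fun y => ENNReal.ofReal (1 / |x - y| ^ (1 + s))) (Set.Iic (-r)),
        hpre]
      refine lintegral_congr fun u => ?_
      have h : x - (x - u) = u := by ring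
      rw [h]
    rw [hsub, ← setLIntegral_congr (MeasureTheory.Ioi_ae_eq_Ici (a := x + r)),
      lint_tail hs (by linarith : (0:ℝ) < x + r)]
    apply ENNReal.ofReal_le_ofReal
    have h1 : (x + r) ^ (-s) ≤ r ^ (-s) :=
      Real.rpow_le_rpow_of_nonpos hr (by linarith) (by linarith)
    exact div_le_div_of_nonneg_right h1 hs.le
  calc Ls1 s (Set.Ioo 0 ε) (Set.Iic (-r))
      ≤ ∫⁻ _x in Set.Ioo (0:ℝ) ε, ENNReal.ofReal (r ^ (-s) / s) :=
        setLIntegral_mono measurable_const hbound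
    _ = ENNReal.ofReal (r ^ (-s) / s) * volume (Set.Ioo (0:ℝ) ε) := setLIntegral_const _ _
    _ = ENNReal.ofReal (r ^ (-s) / s * ε) := by
        rw [Real.volume_Ioo, sub_zero, ← ENNReal.ofReal_mul (by positivity)]

/-- Box lower bound: `L((-r,0),(0,ε)) ≥ ε^{1-s}/4` for `0 < ε ≤ r`. -/
private lemma Ls1_box {s : ℝ} (hs : s ∈ Set.Ioo (0:ℝ) 1) {r ε : ℝ} (hε : 0 < ε) (hεr : ε ≤ r) :
    ENNReal.ofReal (ε ^ (1 - s) / 4) ≤ Ls1 s (Set.Ioo (-r) 0) (Set.Ioo 0 ε) := by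
  obtain ⟨hs0, hs1⟩ := hs
  have hmono : Ls1 s (Set.Ioo (-ε) 0) (Set.Ioo 0 ε) ≤ Ls1 s (Set.Ioo (-r) 0) (Set.Ioo 0 ε) :=
    Ls1_mono_left s _ (HasSubset.Subset.eventuallyLE (Set.Ioo_subset_Ioo (by linarith) le_rfl))
  refine le_trans ?_ hmono
  have hin : ∀ x ∈ Set.Ioo (-ε) (0:ℝ),
      ENNReal.ofReal ((2*ε) ^ (-(1+s))) * ENNReal.ofReal ε
        ≤ ∫⁻ y in Set.Ioo (0:ℝ) ε, ENNReal.ofReal (1 / |x - y| ^ (1 + s)) := by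
    intro x hx
    have hb : ∀ y ∈ Set.Ioo (0:ℝ) ε,
        ENNReal.ofReal ((2*ε) ^ (-(1+s))) ≤ ENNReal.ofReal (1 / |x - y| ^ (1 + s)) := by
      intro y hy
      apply ENNReal.ofReal_le_ofReal
      have habs : |x - y| = y - x := by
        rw [abs_sub_comm, abs_of_pos (by nlinarith [hx.1, hx.2, hy.1, hy.2] : (0:ℝ) < y - x)]
      have hxy0 : 0 < |x - y| := by rw [habs]; nlinarith [hx.2, hy.1]
      have hxy2 : |x - y| ≤ 2 * ε := by rw [habs]; nlinarith [hx.1, hy.2]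
      have hple : |x - y| ^ (1+s) ≤ (2*ε) ^ (1+s) :=
        Real.rpow_le_rpow (abs_nonneg _) hxy2 (by linarith)
      rw [Real.rpow_neg (by positivity), ← one_div]
      exact one_div_le_one_div_of_le (Real.rpow_pos_of_pos hxy0 _) hple
    calc ENNReal.ofReal ((2*ε) ^ (-(1+s))) * ENNReal.ofReal ε
        = ∫⁻ _y in Set.Ioo (0:ℝ) ε, ENNReal.ofReal ((2*ε) ^ (-(1+s))) := by
          rw [setLIntegral_const, Real.volume_Ioo, sub_zero]
      _ ≤ _ := setLIntegral_mono (inner_meas_y s x) hb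
  calc ENNReal.ofReal (ε ^ (1 - s) / 4)
      ≤ ENNReal.ofReal ((2*ε) ^ (-(1+s))) * ENNReal.ofReal ε * ENNReal.ofReal ε := by
        rw [← ENNReal.ofReal_mul (by positivity), ← ENNReal.ofReal_mul (by positivity)]
        apply ENNReal.ofReal_le_ofReal
        have h1 : (2*ε) ^ (-(1+s)) = 2 ^ (-(1+s)) * ε ^ (-(1+s)) :=
          Real.mul_rpow (by norm_num) hε.le
        have h2 : ε ^ (-(1+s)) * ε * ε = ε ^ (1 - s) := by
          have : ε ^ (-(1+s)) * ε * ε = ε ^ (-(1+s)) * ε ^ (1:ℝ) * ε ^ (1:ℝ) := by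
            rw [Real.rpow_one]
          rw [this, ← Real.rpow_add hε, ← Real.rpow_add hε]
          congr 1; ring
        have h3 : (1:ℝ)/4 ≤ 2 ^ (-(1+s)) := by
          have : ((1:ℝ)/4) = 2 ^ (-2 : ℝ) := by
            rw [show (-2:ℝ) = ((-2 : ℤ) : ℝ) by norm_num, Real.rpow_intCast]
            norm_num
          rw [this]
          exact Real.rpow_le_rpow_of_exponent_le (by norm_num) (by linarith)
        calc ε ^ (1-s) / 4 = (1/4) * (ε ^ (-(1+s)) * ε * ε) := by rw [h2]; ring
          _ ≤ 2 ^ (-(1+s)) * (ε ^ (-(1+s)) * ε * ε) :=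
              mul_le_mul_of_nonneg_right h3 (by positivity)
          _ = 2 ^ (-(1+s)) * ε ^ (-(1+s)) * ε * ε := by ring
          _ = (2*ε) ^ (-(1+s)) * ε * ε := by rw [h1]
    _ ≤ (∫⁻ x in Set.Ioo (-ε) (0:ℝ),
          ∫⁻ y in Set.Ioo (0:ℝ) ε, ENNReal.ofReal (1 / |x - y| ^ (1 + s))) := by
        have := setLIntegral_mono (μ := volume) (s := Set.Ioo (-ε) (0:ℝ))
          (inner_meas s (Set.Ioo (0:ℝ) ε)) hin
        calc ENNReal.ofReal ((2*ε) ^ (-(1+s))) * ENNReal.ofReal ε * ENNReal.ofReal ε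
            = (∫⁻ _x in Set.Ioo (-ε) (0:ℝ),
                ENNReal.ofReal ((2*ε) ^ (-(1+s))) * ENNReal.ofReal ε) := by
              rw [setLIntegral_const, Real.volume_Ioo, sub_neg_eq_add, zero_add]
          _ ≤ _ := this
    _ = Ls1 s (Set.Ioo (-ε) 0) (Set.Ioo 0 ε) := rfl

/-- The core estimate on the strip `I = (0,ε)`. -/
private lemma key_estimate {s σm0 σ01 σm1 r ε : ℝ} (hs : s ∈ Set.Ioo (0:ℝ) 1)
    (hσm0 : 0 < σm0) (hσ01 : 0 < σ01)
    (hr : 0 < r) (hε : 0 < ε) (hεr : ε ≤ r)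
    (ha : 0 < (σm1 - σm0 - σ01) / 2)
    (hεs : ε ^ s ≤ (σm1 - σm0 - σ01) / 2 * s * r ^ s / (8 * σ01))
    {Em E0 E1 : Set ℝ}
    (hEmI : Set.Ioo (-r) 0 ⊆ Em)
    (hE1sub : (E1 \ Set.Ioo 0 ε : Set ℝ) ≤ᵐ[volume]
      ((Set.Iic (-r) ∪ Set.Ici ε : Set ℝ) : Set ℝ)) :
    ENNReal.ofReal σm0 * Ls1 s Em (Set.Ioo 0 ε)
      + ENNReal.ofReal σ01 * Ls1 s (Set.Ioo 0 ε) (E1 \ Set.Ioo 0 ε)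
      + ENNReal.ofReal (1/4 * ((σm1 - σm0 - σ01) / 2) * ε ^ (1 - s))
    ≤ ENNReal.ofReal σ01 * Ls1 s E0 (Set.Ioo 0 ε)
      + ENNReal.ofReal σm1 * Ls1 s Em (Set.Ioo 0 ε) := by
  obtain ⟨hs0, hs1⟩ := hs
  set a : ℝ := (σm1 - σm0 - σ01) / 2 with ha_def
  set I : Set ℝ := Set.Ioo 0 ε with hI_def
  set Q : ℝ≥0∞ := Ls1 s (Set.Ioo (-r) 0) I with hQ_def
  set β : ℝ≥0∞ := ENNReal.ofReal (r ^ (-s) / s * ε) with hβ_def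
  have hβnn : (0:ℝ) ≤ r ^ (-s) / s * ε := by positivity
  -- Bound on the interaction of I with the remaining phase 1:
  have hLI1 : Ls1 s I (E1 \ I) ≤ β + β + Q := by
    have h0 : Ls1 s I (Set.Iic 0) ≤ β + Q := by
      have hae : (Set.Iic (0:ℝ)) ≤ᵐ[volume]
          ((Set.Iic (-r) ∪ Set.Ioo (-r) 0 : Set ℝ) : Set ℝ) := by
        rw [MeasureTheory.ae_le_set]
        refine measure_mono_null (t := {(0:ℝ)}) (fun x hx => ?_) Real.volume_singleton
        simp only [Set.mem_diff, Set.mem_Iic, Set.mem_union, Set.mem_Ioo, not_or, not_and,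
          not_lt, not_le] at hx
        have : x = 0 := by
          rcases lt_or_eq_of_le hx.1 with h | h
          · exact absurd (hx.2.2 hx.2.1) (not_le.mpr h)
          · exact h
        simp [this]
      calc Ls1 s I (Set.Iic 0) ≤ Ls1 s I (Set.Iic (-r) ∪ Set.Ioo (-r) 0) :=
            Ls1_mono_right s I hae
        _ ≤ Ls1 s I (Set.Iic (-r)) + Ls1 s I (Set.Ioo (-r) 0) := Ls1_union_le s I _ _
        _ ≤ β + Q := by
            rw [Ls1_symm s I (Set.Ioo (-r) 0)]
            exact add_le_add (Ls1_tail_le hs0 hr hε) le_rfl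
    calc Ls1 s I (E1 \ I) ≤ Ls1 s I (Set.Iic (-r) ∪ Set.Ici ε) := Ls1_mono_right s I hE1sub
      _ ≤ Ls1 s I (Set.Iic (-r)) + Ls1 s I (Set.Ici ε) := Ls1_union_le s I _ _
      _ = Ls1 s I (Set.Iic (-r)) + Ls1 s I (Set.Iic 0) := by rw [hI_def, Ls1_reflect]
      _ ≤ β + (β + Q) := add_le_add (Ls1_tail_le hs0 hr hε) h0
      _ = β + β + Q := by rw [add_assoc]
  -- The purely real part of the estimate:
  have hreal : σ01 * (r ^ (-s) / s * ε + r ^ (-s) / s * ε) + 1/4 * a * ε ^ (1-s)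
      ≤ 2 * a * (ε ^ (1-s) / 4) := by
    have hR : (0:ℝ) < r ^ s := Real.rpow_pos_of_pos hr s
    have hE1s : (0:ℝ) < ε ^ (1-s) := Real.rpow_pos_of_pos hε _
    have hεsplit : ε = ε ^ s * ε ^ (1-s) := by
      rw [← Real.rpow_add hε]; norm_num
    have hrneg : r ^ (-s) = (r ^ s)⁻¹ := Real.rpow_neg hr.le s
    have hεs' : ε ^ s * (8 * σ01) ≤ a * s * r ^ s := by
      rw [le_div_iff₀ (by positivity)] at hεs; linarith
    set R : ℝ := r ^ s
    set X : ℝ := ε ^ s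
    set Y : ℝ := ε ^ (1-s)
    suffices h : σ01 * ((R)⁻¹ / s * (X * Y)) ≤ a * Y / 8 by
      rw [hrneg, hεsplit]; linarith
    have heq : σ01 * ((R)⁻¹ / s * (X * Y)) = (X * (8 * σ01)) * Y / (8 * s * R) := by
      field_simp
    rw [heq, div_le_div_iff₀ (by positivity) (by norm_num : (0:ℝ) < 8)]
    nlinarith [mul_le_mul_of_nonneg_right hεs' hE1s.le]
  -- Assembling in `ℝ≥0∞`:
  have hQle : Q ≤ Ls1 s Em I :=
    Ls1_mono_left s I (HasSubset.Subset.eventuallyLE hEmI)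
  have hsplit : ENNReal.ofReal σm1
      = ENNReal.ofReal σm0 + (ENNReal.ofReal (2*a) + ENNReal.ofReal σ01) := by
    rw [← ENNReal.ofReal_add (by positivity) hσ01.le,
      ← ENNReal.ofReal_add hσm0.le (by positivity)]
    congr 1
    rw [ha_def]; ring
  have hbox : ENNReal.ofReal (2*a) * ENNReal.ofReal (ε ^ (1-s) / 4)
      ≤ ENNReal.ofReal (2*a) * Q :=
    mul_le_mul' le_rfl (Ls1_box ⟨hs0, hs1⟩ hε hεr)
  have hG : ENNReal.ofReal σ01 * (β + β) + ENNReal.ofReal (1/4 * a * ε ^ (1-s))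
      ≤ ENNReal.ofReal (2*a) * ENNReal.ofReal (ε ^ (1-s) / 4) := by
    rw [hβ_def, ← ENNReal.ofReal_add hβnn hβnn, ← ENNReal.ofReal_mul hσ01.le,
      ← ENNReal.ofReal_mul (by positivity : (0:ℝ) ≤ 2*a),
      ← ENNReal.ofReal_add (by positivity) (by positivity)]
    exact ENNReal.ofReal_le_ofReal hreal
  calc ENNReal.ofReal σm0 * Ls1 s Em I + ENNReal.ofReal σ01 * Ls1 s I (E1 \ I)
        + ENNReal.ofReal (1/4 * a * ε ^ (1-s))
      ≤ ENNReal.ofReal σm0 * Ls1 s Em I + ENNReal.ofReal σ01 * (β + β + Q)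
        + ENNReal.ofReal (1/4 * a * ε ^ (1-s)) := by
        exact add_le_add (add_le_add le_rfl (mul_le_mul' le_rfl hLI1)) le_rfl
    _ = ENNReal.ofReal σm0 * Ls1 s Em I + ENNReal.ofReal σ01 * Q
        + (ENNReal.ofReal σ01 * (β + β) + ENNReal.ofReal (1/4 * a * ε ^ (1-s))) := by
        ring
    _ ≤ ENNReal.ofReal σm0 * Ls1 s Em I + ENNReal.ofReal σ01 * Q
        + ENNReal.ofReal (2*a) * ENNReal.ofReal (ε ^ (1-s) / 4) := add_le_add le_rfl hG
    _ ≤ ENNReal.ofReal σm0 * Ls1 s Em I + ENNReal.ofReal σ01 * Q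
        + ENNReal.ofReal (2*a) * Q := add_le_add le_rfl hbox
    _ ≤ ENNReal.ofReal σm0 * Ls1 s Em I + ENNReal.ofReal σ01 * Ls1 s Em I
        + ENNReal.ofReal (2*a) * Ls1 s Em I :=
        add_le_add (add_le_add le_rfl (mul_le_mul' le_rfl hQle)) (mul_le_mul' le_rfl hQle)
    _ = ENNReal.ofReal σm1 * Ls1 s Em I := by rw [hsplit]; ring
    _ ≤ ENNReal.ofReal σ01 * Ls1 s E0 I + ENNReal.ofReal σm1 * Ls1 s Em I :=
        le_add_self

end Helpers

/-- One-dimensional energy reduction: if `α₀ < 0`, `(0,r) ⊆ E₁` and `(-r,0) ⊆ E₋₁`, then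
covering `(0,ε)` with phase `0` reduces the energy by `C₀|α₀|ε^{1-s}`. -/
theorem reduce_energy_strip_1D
    (s : ℝ) (hs : s ∈ Set.Ioo (0 : ℝ) 1)
    (σm0 σ01 σm1 : ℝ) (hσm0 : 0 < σm0) (hσ01 : 0 < σ01) (hσm1 : 0 < σm1)
    (hα0 : (σm0 + σ01 - σm1) / 2 < 0)
    (Ω : Set ℝ) (hΩo : IsOpen Ω) (hΩconn : IsConnected Ω) (hΩb : Bornology.IsBounded Ω)
    (h0Ω : (0 : ℝ) ∈ Ω)
    (r : ℝ) (hr : 0 < r)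
    (Em E0 E1 : Set ℝ) (hadm : Admissible1 Em E0 E1)
    (hE1 : Set.Ioo (0 : ℝ) r ⊆ E1) (hEm : Set.Ioo (-r) (0 : ℝ) ⊆ Em) :
    ∃ C₀ : ℝ, 0 < C₀ ∧ ∃ ε₀ : ℝ, 0 < ε₀ ∧ ∀ ε ∈ Set.Ioo (0 : ℝ) ε₀,
      Admissible1 Em (E0 ∪ Set.Ioo 0 ε) (E1 \ Set.Ioo 0 ε) ∧
      Fs1 s σm0 σ01 σm1 Ω Em (E0 ∪ Set.Ioo 0 ε) (E1 \ Set.Ioo 0 ε) +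
          ENNReal.ofReal (C₀ * |(σm0 + σ01 - σm1) / 2| * ε ^ (1 - s)) ≤
        Fs1 s σm0 σ01 σm1 Ω Em E0 E1 := by
  obtain ⟨hs0, hs1⟩ := hs
  obtain ⟨hEmm, hE0m, hE1m, hcompl, hm0, hm1, h01⟩ := hadm
  have hΩm : MeasurableSet Ω := hΩo.measurableSet
  set a : ℝ := (σm1 - σm0 - σ01) / 2 with ha_def
  have ha : 0 < a := by rw [ha_def]; linarith
  obtain ⟨δ, hδ0, hδ⟩ := Metric.isOpen_iff.mp hΩo 0 h0Ω
  have hball : Metric.ball (0:ℝ) δ = Set.Ioo (-δ) δ := by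
    rw [Real.ball_eq_Ioo]; norm_num
  have hrs : (0:ℝ) < r ^ s := Real.rpow_pos_of_pos hr s
  have hX : (0:ℝ) < a * s * r ^ s / (8 * σ01) := by positivity
  set ε₃ : ℝ := (a * s * r ^ s / (8 * σ01)) ^ (1/s) with hε₃def
  have hε₃0 : 0 < ε₃ := Real.rpow_pos_of_pos hX _
  refine ⟨1/4, by norm_num, min (min r δ) ε₃, by positivity, ?_⟩
  rintro ε ⟨hε0, hεlt⟩
  have hεr : ε ≤ r :=
    le_of_lt (lt_of_lt_of_le hεlt (le_trans (min_le_left _ _) (min_le_left _ _)))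
  have hεδ : ε < δ :=
    lt_of_lt_of_le hεlt (le_trans (min_le_left _ _) (min_le_right _ _))
  set I : Set ℝ := Set.Ioo (0:ℝ) ε with hIdef
  have hIm : MeasurableSet I := measurableSet_Ioo
  have hIΩ : I ⊆ Ω := by
    intro x hx
    apply hδ
    rw [hball]
    exact ⟨by linarith [hx.1], by linarith [hx.2]⟩
  have hIE1 : I ⊆ E1 := fun x hx => hE1 ⟨hx.1, lt_of_lt_of_le hx.2 hεr⟩
  -- admissibility of the new triple
  have hadm' : Admissible1 Em (E0 ∪ I) (E1 \ I) := by
    refine ⟨hEmm, hE0m.union hIm, hE1m.diff hIm, ?_, ?_, ?_, ?_⟩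
    · refine measure_mono_null (Set.compl_subset_compl.mpr ?_) hcompl
      intro x hx
      simp only [Set.mem_union, Set.mem_diff] at *
      by_cases hxI : x ∈ I <;> tauto
    · refine measure_mono_null (t := (Em ∩ E0) ∪ (Em ∩ E1)) ?_ (measure_union_null hm0 hm1)
      rintro x ⟨hxm, hx0 | hxI⟩
      · exact Or.inl ⟨hxm, hx0⟩
      · exact Or.inr ⟨hxm, hIE1 hxI⟩
    · exact measure_mono_null (t := Em ∩ E1) (fun x hx => ⟨hx.1, hx.2.1⟩) hm1
    · refine measure_mono_null (t := E0 ∩ E1) ?_ h01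
      rintro x ⟨hx0 | hxI, hx1⟩
      · exact ⟨hx0, hx1.1⟩
      · exact absurd hxI hx1.2
  refine ⟨hadm', ?_⟩
  -- a.e. disjointness facts
  have hdE0I : MeasureTheory.AEDisjoint volume E0 I :=
    measure_mono_null (t := E0 ∩ E1) (fun x hx => ⟨hx.1, hIE1 hx.2⟩) h01
  have hdE1dI : MeasureTheory.AEDisjoint volume (E1 \ I) I :=
    disjoint_sdiff_self_left.aedisjoint
  -- decompositions of the nonlocal areas
  have Da : nlArea1 s Ω E0 E1 = nlArea1 s Ω E0 (E1 \ I) + Ls1 s E0 I := by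
    conv_lhs => rw [← Set.diff_union_of_subset hIE1]
    exact nlArea1_union_right s hΩm hE0m hIm hIΩ hdE1dI
  have Db : nlArea1 s Ω Em E1 = nlArea1 s Ω Em (E1 \ I) + Ls1 s Em I := by
    conv_lhs => rw [← Set.diff_union_of_subset hIE1]
    exact nlArea1_union_right s hΩm hEmm hIm hIΩ hdE1dI
  have Dc : nlArea1 s Ω Em (E0 ∪ I) = nlArea1 s Ω Em E0 + Ls1 s Em I :=
    nlArea1_union_right s hΩm hEmm hIm hIΩ hdE0I
  have Dd : nlArea1 s Ω (E0 ∪ I) (E1 \ I)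
      = nlArea1 s Ω E0 (E1 \ I) + Ls1 s I (E1 \ I) := by
    rw [nlArea1_symm s Ω (E0 ∪ I) (E1 \ I),
      nlArea1_union_right s hΩm (hE1m.diff hIm) hIm hIΩ hdE0I,
      nlArea1_symm s Ω (E1 \ I) E0, Ls1_symm s (E1 \ I) I]
  -- the remaining phase 1 lies a.e. beyond the interval (-r, ε)
  have hE1sub : (E1 \ I : Set ℝ) ≤ᵐ[volume] ((Set.Iic (-r) ∪ Set.Ici ε : Set ℝ)) := by
    rw [MeasureTheory.ae_le_set]
    refine measure_mono_null (t := (Em ∩ E1) ∪ {(0:ℝ)}) (fun x hx => ?_)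
      (measure_union_null hm1 Real.volume_singleton)
    obtain ⟨⟨hxE1, hxnI⟩, hxn⟩ := hx
    simp only [Set.mem_union, Set.mem_Iic, Set.mem_Ici, not_or, not_le] at hxn
    by_cases hx0 : x < 0
    · exact Or.inl ⟨hEm ⟨hxn.1, hx0⟩, hxE1⟩
    · have hx0' : ¬(0 < x) := fun h => hxnI ⟨h, hxn.2⟩
      have : x = 0 := le_antisymm (not_lt.mp hx0') (not_lt.mp hx0)
      exact Or.inr (by simp [this])
  -- the smallness condition on ε
  have hεs : ε ^ s ≤ a * s * r ^ s / (8 * σ01) := by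
    have h1 : ε < ε₃ := lt_of_lt_of_le hεlt (min_le_right _ _)
    have h2 : ε ^ s < ε₃ ^ s := Real.rpow_lt_rpow hε0.le h1 hs0
    have h3 : ε₃ ^ s = a * s * r ^ s / (8 * σ01) := by
      rw [hε₃def, ← Real.rpow_mul hX.le, one_div_mul_cancel (ne_of_gt hs0), Real.rpow_one]
    linarith
  have habs : |(σm0 + σ01 - σm1) / 2| = a := by
    rw [abs_of_neg hα0, ha_def]; ring
  have hkey := key_estimate (E0 := E0) ⟨hs0, hs1⟩ hσm0 hσ01 hr hε0 hεr ha hεs hEm hE1sub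
  unfold Fs1
  rw [Da, Db, Dc, Dd, habs]
  calc ENNReal.ofReal σm0 * (nlArea1 s Ω Em E0 + Ls1 s Em I)
        + ENNReal.ofReal σ01 * (nlArea1 s Ω E0 (E1 \ I) + Ls1 s I (E1 \ I))
        + ENNReal.ofReal σm1 * nlArea1 s Ω Em (E1 \ I)
        + ENNReal.ofReal (1/4 * a * ε ^ (1 - s))
      = (ENNReal.ofReal σm0 * Ls1 s Em I + ENNReal.ofReal σ01 * Ls1 s I (E1 \ I)
          + ENNReal.ofReal (1/4 * a * ε ^ (1 - s)))
        + (ENNReal.ofReal σm0 * nlArea1 s Ω Em E0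
          + ENNReal.ofReal σ01 * nlArea1 s Ω E0 (E1 \ I)
          + ENNReal.ofReal σm1 * nlArea1 s Ω Em (E1 \ I)) := by ring
    _ ≤ (ENNReal.ofReal σ01 * Ls1 s E0 I + ENNReal.ofReal σm1 * Ls1 s Em I)
        + (ENNReal.ofReal σm0 * nlArea1 s Ω Em E0
          + ENNReal.ofReal σ01 * nlArea1 s Ω E0 (E1 \ I)
          + ENNReal.ofReal σm1 * nlArea1 s Ω Em (E1 \ I)) := add_le_add hkey le_rfl
    _ = ENNReal.ofReal σm0 * nlArea1 s Ω Em E0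
        + ENNReal.ofReal σ01 * (nlArea1 s Ω E0 (E1 \ I) + Ls1 s E0 I)
        + ENNReal.ofReal σm1 * (nlArea1 s Ω Em (E1 \ I) + Ls1 s Em I) := by ring
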